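/- Let S be a finite block group all of whose subgroups are nilpotent. Then S is Mal'cev nilpotent if and only if S satisfies Property P₂: whenever y₁ and y₂ lie in the same J-class J of S and there exist z₁, z₂ ∈ S such that all four products y₁z₁y₂, y₁z₂y₁, y₂z₁y₁ and y₂z₂y₂ lie in J, the elements y₁ and y₂ are H-equivalent. -/

import Mathlib

set_option linter.unusedSectionVars false
set_option maxHeartbeats 1000000


namespace SMN

variable {S : Type*}

/-- Mal'cev sequences `(λ_n, ρ_n)`; `z k` plays the role of `z_{k+1}`. -/
def lr [Mul S] (x y : S) (z : ℕ → S) : ℕ → S × S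
  | 0 => (x, y)
  | n + 1 =>
    let p := lr x y z n
    (p.1 * z n * p.2, p.2 * z n * p.1)

/-- Cyclic shift by `k` in `Fin t`. -/
def cyc {t : ℕ} (i : Fin t) (k : ℕ) : Fin t :=
  ⟨(i.val + k) % t, Nat.mod_lt _ i.pos⟩

/-- Strong Mal'cev sequences `λ_{n,i}`; `z k` plays the role of `z_{k+1}`. -/
def slam [Mul S] {t : ℕ} (x : Fin t → S) (z : ℕ → S) : ℕ → Fin t → S
  | 0 => x
  | n + 1 =>
    let f := slam x z n
    fun i => (List.range (t - 1)).foldl (fun acc j => acc * z n * f (cyc i (j + 1))) (f i)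

/-- A semigroup is Mal'cev nilpotent if for some `n ≥ 1`,
`λ_n = ρ_n` for all `x, y ∈ S` and `z₁, …, z_n ∈ S¹`. -/
def MalcevNilpotent (S : Type*) [Semigroup S] : Prop :=
  ∃ n : ℕ, 1 ≤ n ∧ ∀ (x y : S) (z : ℕ → WithOne S),
    (lr (x : WithOne S) (y : WithOne S) z n).1 = (lr (x : WithOne S) (y : WithOne S) z n).2

/-- Strong Mal'cev nilpotency at level `n`. -/
def SMNAt (S : Type*) [Semigroup S] (n : ℕ) : Prop :=
  ∀ t : ℕ, 2 ≤ t → ∀ (x : Fin t → S) (z : ℕ → WithOne S) (i j : Fin t),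
    slam (fun k => (x k : WithOne S)) z n i = slam (fun k => (x k : WithOne S)) z n j

/-- A semigroup is strongly Mal'cev nilpotent if for some `n ≥ 1`, for every `t ≥ 2`,
`λ_{n,1} = ⋯ = λ_{n,t}` for all `x₁, …, x_t ∈ S` and `z₁, …, z_n ∈ S¹`. -/
def StronglyMalcevNilpotent (S : Type*) [Semigroup S] : Prop :=
  ∃ n : ℕ, 1 ≤ n ∧ SMNAt S n

/-- `y` is an inverse of `x`. -/
def IsInverseOf [Semigroup S] (y x : S) : Prop := x * y * x = x ∧ y * x * y = y

/-- A block group: every element has at most one inverse. -/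
def BlockGroup (S : Type*) [Semigroup S] : Prop :=
  ∀ x y₁ y₂ : S, IsInverseOf y₁ x → IsInverseOf y₂ x → y₁ = y₂

/-- All subgroups (subsemigroups which are groups) of `S` are nilpotent. -/
def AllSubgroupsNilpotent (S : Type*) [Semigroup S] : Prop :=
  ∀ (G : Type) [Group G], ∀ φ : G → S,
    (∀ a b : G, φ (a * b) = φ a * φ b) → Function.Injective φ → Group.IsNilpotent G

/-- All subgroups (subsemigroups which are groups) of `S` are trivial. -/
def AllSubgroupsTrivial (S : Type*) [Semigroup S] : Prop :=
  ∀ (G : Type) [Group G], ∀ φ : G → S,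
    (∀ a b : G, φ (a * b) = φ a * φ b) → Function.Injective φ → ∀ g : G, g = 1

end SMN

namespace SMN

/-- Green's relation `R`: `x R y` iff `xS¹ = yS¹`. -/
def RRel {S : Type*} [Semigroup S] (x y : S) : Prop :=
  (∃ u : WithOne S, (x : WithOne S) * u = (y : WithOne S)) ∧
  (∃ u : WithOne S, (y : WithOne S) * u = (x : WithOne S))

/-- Green's relation `L`: `x L y` iff `S¹x = S¹y`. -/
def LRel {S : Type*} [Semigroup S] (x y : S) : Prop :=
  (∃ u : WithOne S, u * (x : WithOne S) = (y : WithOne S)) ∧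
  (∃ u : WithOne S, u * (y : WithOne S) = (x : WithOne S))

/-- Green's relation `J`: `x J y` iff `S¹xS¹ = S¹yS¹`. -/
def JRel {S : Type*} [Semigroup S] (x y : S) : Prop :=
  (∃ u v : WithOne S, u * (x : WithOne S) * v = (y : WithOne S)) ∧
  (∃ u v : WithOne S, u * (y : WithOne S) * v = (x : WithOne S))

/-- Green's relation `H = R ∩ L`. -/
def HRel {S : Type*} [Semigroup S] (x y : S) : Prop := RRel x y ∧ LRel x y

/-- `X` is an `R`-class of `S`. -/
def IsRClass {S : Type*} [Semigroup S] (X : Set S) : Prop :=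
  ∃ x₀ : S, X = {y : S | RRel y x₀}

/-- An element `x` of a semigroup is regular. -/
def IsRegularElem {S : Type*} [Semigroup S] (x : S) : Prop := ∃ y : S, x * y * x = x

/-- `X` is a regular `R`-class of `S`. -/
def IsRegularRClass {S : Type*} [Semigroup S] (X : Set S) : Prop :=
  IsRClass X ∧ ∃ x ∈ X, IsRegularElem x


/-- Property `P₂`: whenever `y₁, y₂` lie in the same `J`-class `J` and there are
`z₁, z₂ ∈ S` with `y₁z₁y₂, y₁z₂y₁, y₂z₁y₁, y₂z₂y₂ ∈ J`, the elements `y₁` and `y₂` are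
`H`-equivalent. -/
def PropertyP2 (S : Type*) [Semigroup S] : Prop :=
  ∀ y₁ y₂ z₁ z₂ : S, JRel y₁ y₂ →
    JRel (y₁ * z₁ * y₂) y₁ → JRel (y₁ * z₂ * y₁) y₁ →
    JRel (y₂ * z₁ * y₁) y₁ → JRel (y₂ * z₂ * y₂) y₁ →
    HRel y₁ y₂

section Green

variable {S : Type*} [Semigroup S]

local notation "M" => WithOne S

instance withOneFinite (α : Type*) [Finite α] : Finite (WithOne α) := by
  have := Fintype.ofFinite α
  have h : Fintype (Option α) := inferInstance
  exact @Finite.of_fintype (WithOne α) h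

/-- x is J-below y -/
def leJ (x y : M) : Prop := ∃ u v : M, u * y * v = x
def leR (x y : M) : Prop := ∃ u : M, y * u = x
def leL (x y : M) : Prop := ∃ u : M, u * y = x

def Jr (x y : M) : Prop := leJ y x ∧ leJ x y
def Rr (x y : M) : Prop := leR y x ∧ leR x y
def Lr (x y : M) : Prop := leL y x ∧ leL x y

lemma leJ_refl (x : M) : leJ x x := ⟨1, 1, by simp⟩
lemma leR_refl (x : M) : leR x x := ⟨1, by simp⟩
lemma leL_refl (x : M) : leL x x := ⟨1, by simp⟩

lemma leJ_trans {x y z : M} (h1 : leJ x y) (h2 : leJ y z) : leJ x z := by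
  obtain ⟨u, v, rfl⟩ := h1; obtain ⟨u', v', rfl⟩ := h2
  exact ⟨u * u', v' * v, by simp [mul_assoc]⟩

lemma leR_trans {x y z : M} (h1 : leR x y) (h2 : leR y z) : leR x z := by
  obtain ⟨u, rfl⟩ := h1; obtain ⟨u', rfl⟩ := h2
  exact ⟨u' * u, by simp [mul_assoc]⟩

lemma leL_trans {x y z : M} (h1 : leL x y) (h2 : leL y z) : leL x z := by
  obtain ⟨u, rfl⟩ := h1; obtain ⟨u', rfl⟩ := h2
  exact ⟨u * u', by simp [mul_assoc]⟩

lemma leR.toJ {x y : M} (h : leR x y) : leJ x y := by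
  obtain ⟨u, rfl⟩ := h; exact ⟨1, u, by simp⟩

lemma leL.toJ {x y : M} (h : leL x y) : leJ x y := by
  obtain ⟨u, rfl⟩ := h; exact ⟨u, 1, by simp⟩

lemma Jr.symm {x y : M} (h : Jr x y) : Jr y x := ⟨h.2, h.1⟩
lemma Rr.symm {x y : M} (h : Rr x y) : Rr y x := ⟨h.2, h.1⟩
lemma Lr.symm {x y : M} (h : Lr x y) : Lr y x := ⟨h.2, h.1⟩
lemma Jr.refl (x : M) : Jr x x := ⟨leJ_refl x, leJ_refl x⟩
lemma Rr.refl (x : M) : Rr x x := ⟨leR_refl x, leR_refl x⟩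
lemma Lr.refl (x : M) : Lr x x := ⟨leL_refl x, leL_refl x⟩

lemma Jr.trans {x y z : M} (h1 : Jr x y) (h2 : Jr y z) : Jr x z :=
  ⟨leJ_trans h2.1 h1.1, leJ_trans h1.2 h2.2⟩
lemma Rr.trans {x y z : M} (h1 : Rr x y) (h2 : Rr y z) : Rr x z :=
  ⟨leR_trans h2.1 h1.1, leR_trans h1.2 h2.2⟩
lemma Lr.trans {x y z : M} (h1 : Lr x y) (h2 : Lr y z) : Lr x z :=
  ⟨leL_trans h2.1 h1.1, leL_trans h1.2 h2.2⟩

lemma Rr.toJ {x y : M} (h : Rr x y) : Jr x y := ⟨h.1.toJ, h.2.toJ⟩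
lemma Lr.toJ {x y : M} (h : Lr x y) : Jr x y := ⟨h.1.toJ, h.2.toJ⟩

/-- Idempotent power in a finite monoid. -/
lemma exists_idem_pow [Finite S] (c : M) : ∃ m : ℕ, 1 ≤ m ∧ c ^ m * c ^ m = c ^ m := by
  obtain ⟨i, j, hij, hpow⟩ : ∃ i j : ℕ, i ≠ j ∧ c ^ (i + 1) = c ^ (j + 1) := by
    obtain ⟨i, j, hij, h⟩ := Finite.exists_ne_map_eq_of_infinite (fun n : ℕ => c ^ (n + 1))
    exact ⟨i, j, hij, h⟩
  wlog h : i < j generalizing i j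
  · exact this j i hij.symm hpow.symm (by omega)
  set d := j - i with hd
  have hd1 : 1 ≤ d := by omega
  have key : ∀ N, i + 1 ≤ N → c ^ N = c ^ (N + d) := by
    intro N hN
    have : N = (N - (i+1)) + (i + 1) := by omega
    rw [this, pow_add, hpow, ← pow_add]
    congr 1
    omega
  have key2 : ∀ k N, i + 1 ≤ N → c ^ N = c ^ (N + k * d) := by
    intro k
    induction k with
    | zero => simp
    | succ k ih =>
      intro N hN
      rw [key N hN, ih (N + d) (by omega)]
      congr 1
      ring
  refine ⟨(i + 1) * d, by nlinarith, ?_⟩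
  rw [← pow_add]
  exact (key2 (i+1) ((i+1)*d) (by nlinarith)).symm

variable [Finite S]

/-- R-stability. -/
lemma stabR {x t : M} (h : Jr x (x * t)) : Rr x (x * t) := by
  refine ⟨⟨t, rfl⟩, ?_⟩
  obtain ⟨u, v, huv⟩ := h.2
  have hx : u * (x * (t * v)) = x := by rw [← mul_assoc]; simpa [mul_assoc] using huv
  have iter : ∀ n : ℕ, u ^ n * x * (t * v) ^ n = x := by
    intro n
    induction n with
    | zero => simp
    | succ n ih =>
      calc u ^ (n+1) * x * (t * v) ^ (n+1)
          = u ^ n * (u * (x * (t * v))) * (t * v) ^ n := by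
            rw [pow_succ, pow_succ']; simp [mul_assoc]
      _ = u ^ n * x * (t * v) ^ n := by rw [hx]
      _ = x := ih
  obtain ⟨m, hm1, hm⟩ := exists_idem_pow (S := S) (t * v)
  obtain ⟨m', rfl⟩ : ∃ m', m = m' + 1 := ⟨m - 1, by omega⟩
  have h2 : x * (t * v) ^ (m' + 1) = x := by
    have h3 := iter (m' + 1)
    calc x * (t*v)^(m'+1) = u ^ (m'+1) * x * (t * v) ^ (m'+1) * (t*v)^(m'+1) := by rw [h3]
    _ = u ^ (m'+1) * x * ((t * v) ^ (m'+1) * (t*v)^(m'+1)) := by simp [mul_assoc]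
    _ = u ^ (m'+1) * x * (t * v) ^ (m'+1) := by rw [hm]
    _ = x := h3
  refine ⟨v * (t * v) ^ m', ?_⟩
  calc x * t * (v * (t * v) ^ m') = x * (t * v) ^ (m' + 1) := by
        rw [pow_succ']; simp [mul_assoc]
  _ = x := h2

/-- L-stability. -/
lemma stabL {x t : M} (h : Jr x (t * x)) : Lr x (t * x) := by
  refine ⟨⟨t, rfl⟩, ?_⟩
  obtain ⟨u, v, huv⟩ := h.2
  have hx : u * t * x * v = x := by simpa [mul_assoc] using huv
  have iter : ∀ n : ℕ, (u * t) ^ n * x * v ^ n = x := by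
    intro n
    induction n with
    | zero => simp
    | succ n ih =>
      calc (u * t) ^ (n+1) * x * v ^ (n+1)
          = (u * t) ^ n * (u * t * x * v) * v ^ n := by
            rw [pow_succ, pow_succ']; simp [mul_assoc]
      _ = (u * t) ^ n * x * v ^ n := by rw [hx]
      _ = x := ih
  obtain ⟨m, hm1, hm⟩ := exists_idem_pow (S := S) (u * t)
  obtain ⟨m', rfl⟩ : ∃ m', m = m' + 1 := ⟨m - 1, by omega⟩
  have h2 : (u * t) ^ (m' + 1) * x = x := by
    have h3 := iter (m' + 1)
    calc (u*t)^(m'+1) * x = (u*t)^(m'+1) * ((u * t) ^ (m'+1) * x * v ^ (m'+1)) := by rw [h3]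
    _ = ((u*t)^(m'+1) * (u * t) ^ (m'+1)) * x * v ^ (m'+1) := by simp [mul_assoc]
    _ = (u * t) ^ (m'+1) * x * v ^ (m'+1) := by rw [hm]
    _ = x := h3
  refine ⟨(u * t) ^ m' * u, ?_⟩
  calc (u * t) ^ m' * u * (t * x) = (u * t) ^ (m' + 1) * x := by
        rw [pow_succ]; simp [mul_assoc]
  _ = x := h2

end Green

section Green2

variable {S : Type*} [Semigroup S] [Finite S]

local notation "M" => WithOne S

/-- products surrounding an `S`-element stay in the image of `S`. -/
lemma sandwich_coe (u v : M) (s : S) : ∃ t : S, u * (s : M) * v = (t : M) := by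
  by_cases hu : u = 1
  · by_cases hv : v = 1
    · exact ⟨s, by simp [hu, hv]⟩
    · obtain ⟨v₀, rfl⟩ := WithOne.ne_one_iff_exists.mp hv
      exact ⟨s * v₀, by simp [hu]⟩
  · obtain ⟨u₀, rfl⟩ := WithOne.ne_one_iff_exists.mp hu
    by_cases hv : v = 1
    · exact ⟨u₀ * s, by simp [hv]⟩
    · obtain ⟨v₀, rfl⟩ := WithOne.ne_one_iff_exists.mp hv
      exact ⟨u₀ * s * v₀, by simp [mul_assoc]⟩

/-- Any element `J`-below a coerced element is itself coerced. -/
lemma leJ_coe {x : M} {s : S} (h : leJ x (s : M)) : ∃ t : S, x = (t : M) := by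
  obtain ⟨u, v, huv⟩ := h
  obtain ⟨t, ht⟩ := sandwich_coe u v s
  exact ⟨t, by rw [← huv, ht]⟩

/-- class-pair invariance: whether `x * z * y` lies in the `J`-class of `a` depends
only on the `L`-class of `x` and the `R`-class of `y`. -/
lemma Jmid {a c d x y z : M} (h : Jr (c * z * d) a) (hx : Lr x c) (hy : Rr y d) :
    Jr (x * z * y) a := by
  obtain ⟨u, hu⟩ := hx.2     -- u * c = x
  obtain ⟨u', hu'⟩ := hx.1   -- u' * x = c
  obtain ⟨v, hv⟩ := hy.2     -- d * v = y
  obtain ⟨v', hv'⟩ := hy.1   -- y * v' = d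
  have h1 : u * (c * z * d) * v = x * z * y := by
    rw [← hu, ← hv]; simp [mul_assoc]
  have h2 : u' * (x * z * y) * v' = c * z * d := by
    rw [← hu', ← hv']; simp [mul_assoc]
  have hJ : Jr (x * z * y) (c * z * d) := ⟨⟨u', v', h2⟩, ⟨u, v, h1⟩⟩
  exact hJ.trans h

/-- Miller–Clifford: a product of two elements of a `J`-class lying in that class
yields an idempotent `L`-related to the first and `R`-related to the second factor. -/
lemma millerClifford {a x y : M} (hx : Jr x a) (hy : Jr y a) (hxy : Jr (x * y) a) :
    ∃ e : M, e * e = e ∧ Jr e a ∧ Lr e x ∧ Rr e y := by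
  have hxxy : Jr x (x * y) := hx.trans hxy.symm
  obtain ⟨u, hu⟩ := (stabR hxxy).2   -- (x * y) * u = x
  have hxc : x * (y * u) = x := by rw [← mul_assoc]; exact hu
  have hxe : ∀ k : ℕ, x * (y * u) ^ k = x := by
    intro k
    induction k with
    | zero => simp
    | succ k ih => rw [pow_succ, ← mul_assoc, ih, hxc]
  obtain ⟨m, hm1, hm⟩ := exists_idem_pow (S := S) (y * u)
  obtain ⟨m', rfl⟩ : ∃ m', m = m' + 1 := ⟨m - 1, by omega⟩
  set e := (y * u) ^ (m' + 1) with he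
  have hey : e = y * (u * (y * u) ^ m') := by
    rw [he, pow_succ']; simp [mul_assoc]
  have hxe1 : x * e = x := hxe _
  have hJxe : leJ x e := ⟨x, 1, by simp [hxe1]⟩
  have hJey : leJ e (y : M) := ⟨1, u * (y * u) ^ m', by simpa using hey.symm⟩
  have hJea : Jr e a := ⟨leJ_trans hx.1 hJxe, leJ_trans hJey hy.2⟩
  refine ⟨e, hm, hJea, ?_, ?_⟩
  · -- Lr e x
    have hJr_ex : Jr e (x * e) := by rw [hxe1]; exact hJea.trans hx.symm
    have := stabL (x := e) (t := x) hJr_ex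
    rwa [hxe1] at this
  · -- Rr e y
    have hye : y * (u * (y * u) ^ m') = e := hey.symm
    have hJr : Jr y (y * (u * (y * u) ^ m')) := by
      rw [hye]; exact hy.trans hJea.symm
    have := stabR hJr
    rw [hye] at this
    exact this.symm

/-- In a block group, two `L`-equivalent idempotents (both in the image of `S`) coincide. -/
lemma bg_unique_L (hbg : BlockGroup S) {e f : M}
    (he : e * e = e) (hf : f * f = f) (hef : Lr e f)
    {e₀ f₀ : S} (he₀ : e = (e₀ : M)) (hf₀ : f = (f₀ : M)) : e = f := by
  obtain ⟨u, hu⟩ := hef.2   -- u * f = e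
  obtain ⟨v, hv⟩ := hef.1   -- v * e = f
  have hef1 : e * f = e := by
    conv_lhs => rw [← hu]
    rw [mul_assoc, hf, hu]
  have hfe1 : f * e = f := by
    conv_lhs => rw [← hv]
    rw [mul_assoc, he, hv]
  -- e and f are both inverses of f in S
  have h1 : (f₀ : M) * (e₀ : M) * (f₀ : M) = (f₀ : M) := by
    rw [← he₀, ← hf₀, hfe1, hf]
  have h2 : (e₀ : M) * (f₀ : M) * (e₀ : M) = (e₀ : M) := by
    rw [← he₀, ← hf₀, hef1, he]
  have hff : (f₀ : M) * (f₀ : M) * (f₀ : M) = (f₀ : M) := by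
    rw [← hf₀, hf, hf]
  have inv1 : IsInverseOf e₀ f₀ := by
    constructor
    · exact_mod_cast h1
    · exact_mod_cast h2
  have inv2 : IsInverseOf f₀ f₀ := by
    constructor
    · exact_mod_cast hff
    · exact_mod_cast hff
  have := hbg f₀ e₀ f₀ inv1 inv2
  rw [he₀, hf₀, this]

/-- In a block group, two `R`-equivalent idempotents (both in the image of `S`) coincide. -/
lemma bg_unique_R (hbg : BlockGroup S) {e f : M}
    (he : e * e = e) (hf : f * f = f) (hef : Rr e f)
    {e₀ f₀ : S} (he₀ : e = (e₀ : M)) (hf₀ : f = (f₀ : M)) : e = f := by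
  obtain ⟨u, hu⟩ := hef.2   -- f * u = e
  obtain ⟨v, hv⟩ := hef.1   -- e * v = f
  have hfe1 : f * e = e := by
    conv_lhs => rw [← hu]
    rw [← mul_assoc, hf, hu]
  have hef1 : e * f = f := by
    conv_lhs => rw [← hv]
    rw [← mul_assoc, he, hv]
  have h1 : (f₀ : M) * (e₀ : M) * (f₀ : M) = (f₀ : M) := by
    rw [← he₀, ← hf₀, hfe1, hef1]
  have h2 : (e₀ : M) * (f₀ : M) * (e₀ : M) = (e₀ : M) := by
    rw [← he₀, ← hf₀, hef1, hfe1]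
  have hff : (f₀ : M) * (f₀ : M) * (f₀ : M) = (f₀ : M) := by
    rw [← hf₀, hf, hf]
  have inv1 : IsInverseOf e₀ f₀ := by
    constructor
    · exact_mod_cast h1
    · exact_mod_cast h2
  have inv2 : IsInverseOf f₀ f₀ := by
    constructor
    · exact_mod_cast hff
    · exact_mod_cast hff
  have := hbg f₀ e₀ f₀ inv1 inv2
  rw [he₀, hf₀, this]

end Green2

section GroupMalcev

/-- `lr` commutes with multiplicative maps. -/
lemma lr_map {A B : Type*} [Mul A] [Mul B] (f : A → B)
    (hf : ∀ x y : A, f (x * y) = f x * f y) (x y : A) (z : ℕ → A) (n : ℕ) :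
    (lr (f x) (f y) (fun k => f (z k)) n).1 = f ((lr x y z n).1) ∧
    (lr (f x) (f y) (fun k => f (z k)) n).2 = f ((lr x y z n).2) := by
  induction n with
  | zero => exact ⟨rfl, rfl⟩
  | succ n ih =>
    constructor
    · show (lr (f x) (f y) _ n).1 * f (z n) * (lr (f x) (f y) _ n).2 = _
      rw [ih.1, ih.2, ← hf, ← hf]
      rfl
    · show (lr (f x) (f y) _ n).2 * f (z n) * (lr (f x) (f y) _ n).1 = _
      rw [ih.1, ih.2, ← hf, ← hf]
      rfl

open scoped commutatorElement in
/-- In a nilpotent group the Mal'cev identities hold. -/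
lemma group_malcev {G : Type*} [Group G] (h : Group.IsNilpotent G) :
    ∃ c : ℕ, 1 ≤ c ∧ ∀ (x y : G) (z : ℕ → G), (lr x y z c).1 = (lr x y z c).2 := by
  obtain ⟨c, hc⟩ := nilpotent_iff_lowerCentralSeries.mp h
  refine ⟨c + 1, by omega, ?_⟩
  intro x y z
  have key : ∀ n : ℕ, (lr x y z n).1 * ((lr x y z n).2)⁻¹ ∈ Subgroup.lowerCentralSeries (⊤ : Subgroup G) n := by
    intro n
    induction n with
    | zero => exact Subgroup.mem_top _
    | succ n ih =>
      have hid : (lr x y z (n+1)).1 * ((lr x y z (n+1)).2)⁻¹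
          = ⁅(lr x y z n).1 * ((lr x y z n).2)⁻¹, (lr x y z n).2 * z n⁆ := by
        show (lr x y z n).1 * z n * (lr x y z n).2 * ((lr x y z n).2 * z n * (lr x y z n).1)⁻¹ = _
        rw [commutatorElement_def]
        group
      rw [hid]
      exact Subgroup.commutator_mem_commutator ih (Subgroup.mem_top _)
  have h1 := key (c + 1)
  have h2 : Subgroup.lowerCentralSeries (⊤ : Subgroup G) (c + 1) ≤ Subgroup.lowerCentralSeries (⊤ : Subgroup G) c :=
    Subgroup.lowerCentralSeries_antitone ⊤ (by omega)
  rw [hc] at h2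
  have := h2 h1
  rw [Subgroup.mem_bot] at this
  rw [← mul_inv_eq_one]
  exact this

end GroupMalcev



section Dir1

variable {S : Type*} [Semigroup S] [Finite S]

local notation "M" => WithOne S

lemma JRel_iff_Jr {x y : S} : JRel x y ↔ Jr (x : M) (y : M) := Iff.rfl
lemma RRel_iff_Rr {x y : S} : RRel x y ↔ Rr (x : M) (y : M) := Iff.rfl
lemma LRel_iff_Lr {x y : S} : LRel x y ↔ Lr (x : M) (y : M) := Iff.rfl

lemma malcev_implies_P2 (h : MalcevNilpotent S) : PropertyP2 S := by
  intro y₁ y₂ z₁ z₂ h12 hc1 hc2 hc3 hc4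
  obtain ⟨n, hn1, hmal⟩ := h
  have hJab : Jr (y₁ : M) (y₂ : M) := h12
  have h1 : Jr ((y₁ : M) * (z₁ : M) * (y₂ : M)) (y₁ : M) := by
    have := (JRel_iff_Jr).mp hc1
    simpa [WithOne.coe_mul] using this
  have h2 : Jr ((y₁ : M) * (z₂ : M) * (y₁ : M)) (y₁ : M) := by
    have := (JRel_iff_Jr).mp hc2
    simpa [WithOne.coe_mul] using this
  have h3 : Jr ((y₂ : M) * (z₁ : M) * (y₁ : M)) (y₁ : M) := by
    have := (JRel_iff_Jr).mp hc3
    simpa [WithOne.coe_mul] using this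
  have h4 : Jr ((y₂ : M) * (z₂ : M) * (y₂ : M)) (y₁ : M) := by
    have := (JRel_iff_Jr).mp hc4
    simpa [WithOne.coe_mul] using this
  set a : M := (y₁ : M) with ha
  set b : M := (y₂ : M) with hb
  set ζ : ℕ → M := fun k => if Even k then (z₁ : M) else (z₂ : M) with hζ
  have main : ∀ k, Jr (lr a b ζ k).1 a ∧ Jr (lr a b ζ k).2 a ∧
      Rr (lr a b ζ k).1 a ∧ Rr (lr a b ζ k).2 b ∧
      Lr (lr a b ζ k).1 (if Even k then a else b) ∧
      Lr (lr a b ζ k).2 (if Even k then b else a) := by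
    intro k
    induction k with
    | zero =>
      refine ⟨Jr.refl a, hJab.symm, Rr.refl a, Rr.refl b, ?_, ?_⟩
      · simp only [if_pos (Even.zero)]
        exact Lr.refl a
      · simp only [if_pos (Even.zero)]
        exact Lr.refl b
    | succ k ih =>
      obtain ⟨iJL, iJR, iRL, iRR, iLL, iLR⟩ := ih
      have hstep1 : (lr a b ζ (k+1)).1 = (lr a b ζ k).1 * ζ k * (lr a b ζ k).2 := rfl
      have hstep2 : (lr a b ζ (k+1)).2 = (lr a b ζ k).2 * ζ k * (lr a b ζ k).1 := rfl
      by_cases hk : Even k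
      · have hz : ζ k = (z₁ : M) := if_pos hk
        have hLc : Lr (lr a b ζ k).1 a := by rw [if_pos hk] at iLL; exact iLL
        have hRc : Lr (lr a b ζ k).2 b := by rw [if_pos hk] at iLR; exact iLR
        have hJL' : Jr ((lr a b ζ k).1 * ζ k * (lr a b ζ k).2) a := by
          rw [hz]; exact Jmid h1 hLc iRR
        have hJR' : Jr ((lr a b ζ k).2 * ζ k * (lr a b ζ k).1) a := by
          rw [hz]; exact Jmid h3 hRc iRL
        have hRL' : Rr ((lr a b ζ k).1 * ζ k * (lr a b ζ k).2) (lr a b ζ k).1 := by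
          have hJ : Jr (lr a b ζ k).1 ((lr a b ζ k).1 * (ζ k * (lr a b ζ k).2)) := by
            rw [← mul_assoc]; exact iJL.trans hJL'.symm
          have := stabR hJ
          rw [← mul_assoc] at this
          exact this.symm
        have hRR' : Rr ((lr a b ζ k).2 * ζ k * (lr a b ζ k).1) (lr a b ζ k).2 := by
          have hJ : Jr (lr a b ζ k).2 ((lr a b ζ k).2 * (ζ k * (lr a b ζ k).1)) := by
            rw [← mul_assoc]; exact iJR.trans hJR'.symm
          have := stabR hJ
          rw [← mul_assoc] at this
          exact this.symm
        have hLL' : Lr ((lr a b ζ k).1 * ζ k * (lr a b ζ k).2) (lr a b ζ k).2 := by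
          have hJ : Jr (lr a b ζ k).2 (((lr a b ζ k).1 * ζ k) * (lr a b ζ k).2) := by
            exact iJR.trans hJL'.symm
          exact (stabL hJ).symm
        have hLR' : Lr ((lr a b ζ k).2 * ζ k * (lr a b ζ k).1) (lr a b ζ k).1 := by
          have hJ : Jr (lr a b ζ k).1 (((lr a b ζ k).2 * ζ k) * (lr a b ζ k).1) := by
            exact iJL.trans hJR'.symm
          exact (stabL hJ).symm
        have hknot : ¬ Even (k + 1) := by simp [Nat.even_add_one, hk]
        refine ⟨?_, ?_, ?_, ?_, ?_, ?_⟩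
        · rw [hstep1]; exact hJL'
        · rw [hstep2]; exact hJR'
        · rw [hstep1]; exact hRL'.trans iRL
        · rw [hstep2]; exact hRR'.trans iRR
        · rw [hstep1, if_neg hknot]; exact hLL'.trans hRc
        · rw [hstep2, if_neg hknot]; exact hLR'.trans hLc
      · have hz : ζ k = (z₂ : M) := if_neg hk
        have hLc : Lr (lr a b ζ k).1 b := by rw [if_neg hk] at iLL; exact iLL
        have hRc : Lr (lr a b ζ k).2 a := by rw [if_neg hk] at iLR; exact iLR
        have hJL' : Jr ((lr a b ζ k).1 * ζ k * (lr a b ζ k).2) a := by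
          rw [hz]; exact Jmid h4 hLc iRR
        have hJR' : Jr ((lr a b ζ k).2 * ζ k * (lr a b ζ k).1) a := by
          rw [hz]; exact Jmid h2 hRc iRL
        have hRL' : Rr ((lr a b ζ k).1 * ζ k * (lr a b ζ k).2) (lr a b ζ k).1 := by
          have hJ : Jr (lr a b ζ k).1 ((lr a b ζ k).1 * (ζ k * (lr a b ζ k).2)) := by
            rw [← mul_assoc]; exact iJL.trans hJL'.symm
          have := stabR hJ
          rw [← mul_assoc] at this
          exact this.symm
        have hRR' : Rr ((lr a b ζ k).2 * ζ k * (lr a b ζ k).1) (lr a b ζ k).2 := by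
          have hJ : Jr (lr a b ζ k).2 ((lr a b ζ k).2 * (ζ k * (lr a b ζ k).1)) := by
            rw [← mul_assoc]; exact iJR.trans hJR'.symm
          have := stabR hJ
          rw [← mul_assoc] at this
          exact this.symm
        have hLL' : Lr ((lr a b ζ k).1 * ζ k * (lr a b ζ k).2) (lr a b ζ k).2 := by
          have hJ : Jr (lr a b ζ k).2 (((lr a b ζ k).1 * ζ k) * (lr a b ζ k).2) := by
            exact iJR.trans hJL'.symm
          exact (stabL hJ).symm
        have hLR' : Lr ((lr a b ζ k).2 * ζ k * (lr a b ζ k).1) (lr a b ζ k).1 := by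
          have hJ : Jr (lr a b ζ k).1 (((lr a b ζ k).2 * ζ k) * (lr a b ζ k).1) := by
            exact iJL.trans hJR'.symm
          exact (stabL hJ).symm
        have hkyes : Even (k + 1) := by simp [Nat.even_add_one, hk]
        refine ⟨?_, ?_, ?_, ?_, ?_, ?_⟩
        · rw [hstep1]; exact hJL'
        · rw [hstep2]; exact hJR'
        · rw [hstep1]; exact hRL'.trans iRL
        · rw [hstep2]; exact hRR'.trans iRR
        · rw [hstep1, if_pos hkyes]; exact hLL'.trans hRc
        · rw [hstep2, if_pos hkyes]; exact hLR'.trans hLc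
  have heq : (lr a b ζ n).1 = (lr a b ζ n).2 := hmal y₁ y₂ ζ
  obtain ⟨_, _, hRL, hRR, hLL, hLR⟩ := main n
  have hRab : Rr a b := by
    refine hRL.symm.trans ?_
    rw [heq]
    exact hRR
  have hLab : Lr a b := by
    by_cases hn : Even n
    · rw [if_pos hn] at hLL hLR
      refine hLL.symm.trans ?_
      rw [heq]
      exact hLR
    · rw [if_neg hn] at hLL hLR
      have h1' : Lr (lr a b ζ n).1 b := hLL
      have h2' : Lr (lr a b ζ n).2 a := hLR
      rw [heq] at h1'
      exact h2'.symm.trans h1'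
  exact ⟨hRab, hLab⟩

end Dir1


section Dir2

lemma lr_fst {A : Type*} [Mul A] (a b : A) (w : ℕ → A) (n : ℕ) :
    (lr a b w (n+1)).1 = (lr a b w n).1 * w n * (lr a b w n).2 := rfl

lemma lr_snd {A : Type*} [Mul A] (a b : A) (w : ℕ → A) (n : ℕ) :
    (lr a b w (n+1)).2 = (lr a b w n).2 * w n * (lr a b w n).1 := rfl

lemma lr_propagate {A : Type*} [Mul A] (a b : A) (w : ℕ → A) (m : ℕ)
    (h : (lr a b w m).1 = (lr a b w m).2) :
    ∀ d, (lr a b w (m+d)).1 = (lr a b w (m+d)).2 := by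
  intro d
  induction d with
  | zero => exact h
  | succ d ih =>
    have hmd : m + (d + 1) = (m + d) + 1 := by omega
    rw [hmd, lr_fst, lr_snd, ih]

variable {S : Type*} [Semigroup S] [Finite S]

local notation "M" => WithOne S

lemma P2_implies_malcev (hbg : BlockGroup S) (hnil : AllSubgroupsNilpotent S)
    (hp : PropertyP2 S) : MalcevNilpotent S := by
  by_contra hM
  simp only [MalcevNilpotent, not_exists, not_and, not_forall] at hM
  classical
  have : Fintype (M × M) := Fintype.ofFinite _
  set N : ℕ := Fintype.card (M × M) + 1 with hN
  obtain ⟨x, y, z, hwit⟩ := hM N (by omega)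
  set p : ℕ → M × M := lr (x : M) (y : M) z with hpdef
  have hlt : ∀ m, m ≤ N → (p m).1 ≠ (p m).2 := by
    intro m hm heq
    have := lr_propagate (x : M) (y : M) z m heq (N - m)
    rw [show m + (N - m) = N by omega] at this
    exact hwit this
  obtain ⟨i, j, hij, hjN, hpeq⟩ : ∃ i j : ℕ, i < j ∧ j ≤ N ∧ p i = p j := by
    obtain ⟨i', j', hij', hfeq⟩ :=
      Fintype.exists_ne_map_eq_of_card_lt (fun i : Fin (N + 1) => p i.val)
        (by rw [Fintype.card_fin]; omega)
    have hne : i'.val ≠ j'.val := fun hv => hij' (Fin.ext hv)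
    rcases lt_or_gt_of_ne hne with h | h
    · exact ⟨i'.val, j'.val, h, by omega, hfeq⟩
    · exact ⟨j'.val, i'.val, h, by omega, hfeq.symm⟩
  -- the cycle data
  set a : M := (p i).1 with hadef
  set b : M := (p i).2 with hbdef
  set k : ℕ := j - i with hkdef
  have hk1 : 1 ≤ k := by omega
  set w : ℕ → M := fun m => z (i + m % k) with hwdef
  set Q : ℕ → M × M := lr a b w with hQdef
  have hQ0 : Q 0 = (a, b) := rfl
  have hQp : ∀ m, m ≤ k → Q m = p (i + m) := by
    intro m
    induction m with
    | zero => intro _; simp [hQ0, hadef, hbdef]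
    | succ m ih =>
      intro hm
      have ih' := ih (by omega)
      have hwm : w m = z (i + m) := by
        simp only [hwdef]
        rw [Nat.mod_eq_of_lt (by omega)]
      have h1 : Q (m+1) = ((Q m).1 * w m * (Q m).2, (Q m).2 * w m * (Q m).1) := rfl
      have h2 : p (i + (m+1)) = ((p (i+m)).1 * z (i+m) * (p (i+m)).2,
          (p (i+m)).2 * z (i+m) * (p (i+m)).1) := by
        rw [show i + (m+1) = (i+m)+1 by omega]
        rfl
      rw [h1, h2, ih', hwm]
  have hQk : Q k = (a, b) := by
    rw [hQp k le_rfl, show i + k = j by omega, ← hpeq]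
  have per : ∀ m, Q (m + k) = Q m := by
    intro m
    induction m with
    | zero => rw [zero_add, hQk, hQ0]
    | succ m ih =>
      have h1 : m + 1 + k = (m + k) + 1 := by omega
      have hww : w (m + k) = w m := by
        simp only [hwdef]
        rw [Nat.add_mod_right]
      have e1 : Q ((m+k)+1) = ((Q (m+k)).1 * w (m+k) * (Q (m+k)).2,
          (Q (m+k)).2 * w (m+k) * (Q (m+k)).1) := rfl
      have e2 : Q (m+1) = ((Q m).1 * w m * (Q m).2, (Q m).2 * w m * (Q m).1) := rfl
      rw [h1, e1, e2, ih, hww]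
  have perMul : ∀ c m, Q (m + c * k) = Q m := by
    intro c
    induction c with
    | zero => simp
    | succ c ih =>
      intro m
      have : m + (c+1) * k = (m + c * k) + k := by ring
      rw [this, per, ih]
  have hQmult : ∀ m, Q (m * k) = (a, b) := by
    intro m
    have := perMul m 0
    rw [zero_add] at this
    rw [this, hQ0]
  have hab : a ≠ b := hlt i (by omega)
  have hne : ∀ m, (Q m).1 ≠ (Q m).2 := by
    intro m heq
    have hprop := lr_propagate a b w m heq ((m+1) * k - m)
    have hmk : m + ((m+1) * k - m) = (m+1) * k := by
      have h1 : (m+1) * 1 ≤ (m+1) * k := Nat.mul_le_mul_left _ hk1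
      omega
    rw [hmk] at hprop
    have hq := hQmult (m+1)
    rw [hQdef] at hq
    rw [hq] at hprop
    exact hab hprop
  -- J-class facts
  have led1 : ∀ m d, leJ (Q (m + d)).1 (Q m).1 := by
    intro m d
    induction d with
    | zero => exact leJ_refl _
    | succ d ih =>
      refine leJ_trans ?_ ih
      rw [show m + (d+1) = (m+d)+1 by omega, lr_fst]
      exact ⟨1, w (m+d) * (Q (m+d)).2, by simp [mul_assoc]; rfl⟩
  have led2 : ∀ m d, leJ (Q (m + d)).2 (Q m).2 := by
    intro m d
    induction d with
    | zero => exact leJ_refl _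
    | succ d ih =>
      refine leJ_trans ?_ ih
      rw [show m + (d+1) = (m+d)+1 by omega, lr_snd]
      exact ⟨1, w (m+d) * (Q (m+d)).1, by simp [mul_assoc]; rfl⟩
  have cross12 : ∀ m, leJ (Q (m+1)).1 (Q m).2 := by
    intro m
    rw [lr_fst]
    exact ⟨(Q m).1 * w m, 1, by simp [mul_assoc]; rfl⟩
  have cross21 : ∀ m, leJ (Q (m+1)).2 (Q m).1 := by
    intro m
    rw [lr_snd]
    exact ⟨(Q m).2 * w m, 1, by simp [mul_assoc]; rfl⟩
  have haQ1 : ∀ m, leJ a (Q m).1 := by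
    intro m
    have h1 := led1 m ((m+1) * k - m)
    have hmk : m + ((m+1) * k - m) = (m+1) * k := by
      have h2 : (m+1) * 1 ≤ (m+1) * k := Nat.mul_le_mul_left _ hk1
      omega
    rw [hmk] at h1
    rw [hQmult (m+1)] at h1
    exact h1
  have hbQ2 : ∀ m, leJ b (Q m).2 := by
    intro m
    have h1 := led2 m ((m+1) * k - m)
    have hmk : m + ((m+1) * k - m) = (m+1) * k := by
      have h2 : (m+1) * 1 ≤ (m+1) * k := Nat.mul_le_mul_left _ hk1
      omega
    rw [hmk] at h1
    rw [hQmult (m+1)] at h1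
    exact h1
  have hQ1a : ∀ m, leJ (Q m).1 a := by
    intro m
    have := led1 0 m
    rw [zero_add] at this
    exact this
  have hQ2b : ∀ m, leJ (Q m).2 b := by
    intro m
    have := led2 0 m
    rw [zero_add] at this
    exact this
  have hJba : Jr b a := by
    constructor
    · -- leJ a b
      have h2 := cross12 (k-1)
      rw [show (k-1)+1 = k by omega, hQk] at h2
      exact leJ_trans h2 (hQ2b (k-1))
    · -- leJ b a
      have h2 := cross21 (k-1)
      rw [show (k-1)+1 = k by omega, hQk] at h2
      exact leJ_trans h2 (hQ1a (k-1))
  have hJ1 : ∀ m, Jr (Q m).1 a := fun m => ⟨haQ1 m, leJ_trans (hQ1a m) (leJ_refl a)⟩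
  have hJ2 : ∀ m, Jr (Q m).2 a := fun m =>
    ⟨leJ_trans hJba.1 (hbQ2 m), leJ_trans (hQ2b m) hJba.2⟩
  -- the images are coerced elements of S
  have himgp : ∀ m, (∃ s : S, (p m).1 = (s : M)) ∧ (∃ s : S, (p m).2 = (s : M)) := by
    intro m
    induction m with
    | zero => exact ⟨⟨x, rfl⟩, ⟨y, rfl⟩⟩
    | succ m ih =>
      constructor
      · obtain ⟨s, hs⟩ := ih.1
        obtain ⟨t, ht⟩ := sandwich_coe 1 (z m * (p m).2) s
        refine ⟨t, ?_⟩
        rw [lr_fst] at *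
        rw [hs, ← ht]
        simp [mul_assoc]
        rfl
      · obtain ⟨s, hs⟩ := ih.2
        obtain ⟨t, ht⟩ := sandwich_coe 1 (z m * (p m).1) s
        refine ⟨t, ?_⟩
        rw [lr_snd] at *
        rw [hs, ← ht]
        simp [mul_assoc]
        rfl
  obtain ⟨a₀, ha₀⟩ := (himgp i).1
  obtain ⟨b₀, hb₀⟩ := (himgp i).2
  have himgJ : ∀ {v : M}, Jr v a → ∃ s : S, v = (s : M) := by
    intro v hv
    have h2 := hv.2
    rw [hadef, ha₀] at h2
    exact leJ_coe h2
  -- R/L class tracking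
  have track : ∀ m, Rr (Q m).1 a ∧ Rr (Q m).2 b ∧
      Lr (Q m).1 (if Even m then a else b) ∧ Lr (Q m).2 (if Even m then b else a) := by
    intro m
    induction m with
    | zero =>
      refine ⟨Rr.refl a, Rr.refl b, ?_, ?_⟩
      · rw [if_pos Even.zero]; exact Lr.refl a
      · rw [if_pos Even.zero]; exact Lr.refl b
    | succ m ih =>
      obtain ⟨iR1, iR2, iL1, iL2⟩ := ih
      have hR1 : Rr (Q (m+1)).1 (Q m).1 := by
        have hJ : Jr (Q m).1 ((Q m).1 * (w m * (Q m).2)) := by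
          rw [← mul_assoc, ← lr_fst]
          exact (hJ1 m).trans (hJ1 (m+1)).symm
        have := stabR hJ
        rw [← mul_assoc, ← lr_fst] at this
        exact this.symm
      have hR2 : Rr (Q (m+1)).2 (Q m).2 := by
        have hJ : Jr (Q m).2 ((Q m).2 * (w m * (Q m).1)) := by
          rw [← mul_assoc, ← lr_snd]
          exact (hJ2 m).trans (hJ2 (m+1)).symm
        have := stabR hJ
        rw [← mul_assoc, ← lr_snd] at this
        exact this.symm
      have hL1 : Lr (Q (m+1)).1 (Q m).2 := by
        have hJ : Jr (Q m).2 (((Q m).1 * w m) * (Q m).2) := by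
          rw [← lr_fst]
          exact (hJ2 m).trans (hJ1 (m+1)).symm
        have := stabL hJ
        rw [← lr_fst] at this
        exact this.symm
      have hL2 : Lr (Q (m+1)).2 (Q m).1 := by
        have hJ : Jr (Q m).1 (((Q m).2 * w m) * (Q m).1) := by
          rw [← lr_snd]
          exact (hJ1 m).trans (hJ2 (m+1)).symm
        have := stabL hJ
        rw [← lr_snd] at this
        exact this.symm
      refine ⟨hR1.trans iR1, hR2.trans iR2, ?_, ?_⟩
      · by_cases hm : Even m
        · rw [if_neg (by simp [Nat.even_add_one, hm])]
          rw [if_pos hm] at iL2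
          exact hL1.trans iL2
        · rw [if_pos (by simp [Nat.even_add_one, hm])]
          rw [if_neg hm] at iL2
          exact hL1.trans iL2
      · by_cases hm : Even m
        · rw [if_neg (by simp [Nat.even_add_one, hm])]
          rw [if_pos hm] at iL1
          exact hL2.trans iL1
        · rw [if_pos (by simp [Nat.even_add_one, hm])]
          rw [if_neg hm] at iL1
          exact hL2.trans iL1
  -- convenient class facts
  have trR1 : ∀ m, Rr (Q m).1 a := fun m => (track m).1
  have trR2 : ∀ m, Rr (Q m).2 b := fun m => (track m).2.1
  have trL1e : ∀ m, Even m → Lr (Q m).1 a := by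
    intro m hm
    have := (track m).2.2.1
    rwa [if_pos hm] at this
  have trL1o : ∀ m, ¬ Even m → Lr (Q m).1 b := by
    intro m hm
    have := (track m).2.2.1
    rwa [if_neg hm] at this
  have trL2e : ∀ m, Even m → Lr (Q m).2 b := by
    intro m hm
    have := (track m).2.2.2
    rwa [if_pos hm] at this
  have trL2o : ∀ m, ¬ Even m → Lr (Q m).2 a := by
    intro m hm
    have := (track m).2.2.2
    rwa [if_neg hm] at this
  -- the two main cases
  by_cases hH : Rr a b ∧ Lr a b
  · -- group case
    obtain ⟨hRab, hLab⟩ := hH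
    -- an idempotent g L-equivalent to a
    have hJt : Jr (w 0 * b) a := by
      constructor
      · -- leJ a (w 0 * b)
        obtain ⟨u', v', huv⟩ := (hJ1 (0+1)).1
        rw [lr_fst] at huv
        refine ⟨u' * a, v', ?_⟩
        calc u' * a * (w 0 * b) * v' = u' * ((Q 0).1 * w 0 * (Q 0).2) * v' := by
              simp [mul_assoc]; rfl
          _ = a := huv
      · exact leJ_trans ⟨w 0, 1, by simp [mul_assoc]⟩ hJba.2
    have hprod : Jr (a * (w 0 * b)) a := by
      have h0 := hJ1 (0+1)
      rw [lr_fst] at h0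
      rw [← mul_assoc] at *
      exact h0
    obtain ⟨g, hgg, hgJ, hgL, hgR⟩ := millerClifford (Jr.refl a) hJt hprod
    obtain ⟨pp, hpp⟩ := hgL.1   -- pp * g = a
    obtain ⟨qq, hqq⟩ := hgL.2   -- qq * a = g
    have hfix : ∀ v : M, leR v a → pp * (qq * v) = v := by
      intro v hv
      obtain ⟨s, hs⟩ := hv
      calc pp * (qq * v) = pp * (qq * (a * s)) := by rw [hs]
        _ = pp * ((qq * a) * s) := by simp [mul_assoc]
        _ = (pp * g) * s := by rw [hqq]; simp [mul_assoc]
        _ = a * s := by rw [hpp]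
        _ = v := hs
    have hgildL : ∀ v : M, Lr v g → v * g = v := by
      intro v hv
      obtain ⟨u, hu⟩ := hv.2
      rw [← hu, mul_assoc, hgg]
    have hgildR : ∀ v : M, Rr v g → g * v = v := by
      intro v hv
      obtain ⟨u, hu⟩ := hv.2
      rw [← hu, ← mul_assoc, hgg]
    have hqH : ∀ v : M, Rr v a → Lr v a → Lr (qq * v) g ∧ Rr (qq * v) g := by
      intro v hRv hLv
      constructor
      · have h1 : Lr (qq * v) v := by
          refine ⟨⟨pp, hfix v hRv.2⟩, ⟨qq, rfl⟩⟩
        exact (h1.trans hLv).trans hgL.symm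
      · constructor
        · -- leR g (qq * v)
          obtain ⟨s', hs'⟩ := hRv.1   -- v * s' = a
          refine ⟨s', ?_⟩
          calc qq * v * s' = qq * (v * s') := by rw [mul_assoc]
            _ = qq * a := by rw [hs']
            _ = g := hqq
        · -- leR (qq * v) g
          obtain ⟨s, hs⟩ := hRv.2    -- a * s = v
          refine ⟨s, ?_⟩
          calc g * s = qq * a * s := by rw [hqq]
            _ = qq * (a * s) := by rw [mul_assoc]
            _ = qq * v := by rw [hs]
    have hLany1 : ∀ m, Lr (Q m).1 a := by
      intro m
      by_cases hm : Even m
      · exact trL1e m hm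
      · exact (trL1o m hm).trans hLab.symm
    have hLany2 : ∀ m, Lr (Q m).2 a := by
      intro m
      by_cases hm : Even m
      · exact (trL2e m hm).trans hLab.symm
      · exact trL2o m hm
    have hRany2 : ∀ m, Rr (Q m).2 a := fun m => (trR2 m).trans hRab.symm
    have hHgL : ∀ m, Lr (qq * (Q m).1) g ∧ Rr (qq * (Q m).1) g :=
      fun m => hqH _ (trR1 m) (hLany1 m)
    have hHgR : ∀ m, Lr (qq * (Q m).2) g ∧ Rr (qq * (Q m).2) g :=
      fun m => hqH _ (hRany2 m) (hLany2 m)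
    -- H-class of g is closed under multiplication
    have hJg_of : ∀ v : M, Lr v g ∧ Rr v g → Jr v a := fun v hv => (hv.1.toJ).trans hgJ
    have hmulH : ∀ v u : M, (Lr v g ∧ Rr v g) → (Lr u g ∧ Rr u g) →
        (Lr (v * u) g ∧ Rr (v * u) g) := by
      intro v u hv hu
      obtain ⟨t, ht⟩ := hv.1.1    -- t * v = g
      have hgu : g * u = u := hgildR u hu.2
      have hJvu : Jr (v * u) a := by
        constructor
        · -- leJ a (v * u)
          refine leJ_trans (hJg_of u hu).1 ⟨t, 1, ?_⟩
          calc t * (v * u) * 1 = (t * v) * u := by simp [mul_assoc]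
            _ = g * u := by rw [ht]
            _ = u := hgu
        · exact leJ_trans ⟨1, u, by simp [mul_assoc]⟩ (hJg_of v hv).2
      constructor
      · -- L-class
        have hJ : Jr u (v * u) := (hJg_of u hu).trans hJvu.symm
        exact (stabL hJ).symm.trans hu.1
      · -- R-class
        have hJ : Jr v (v * (u)) := by
          have := (hJg_of v hv).trans hJvu.symm
          exact this
        exact (stabR hJ).symm.trans hv.2
    have hinv : ∀ v : M, (Lr v g ∧ Rr v g) →
        ∃ v' : M, (Lr v' g ∧ Rr v' g) ∧ v' * v = g ∧ v * v' = g := by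
      intro v hv
      have hpow : ∀ m : ℕ, (Lr (v ^ (m+1)) g ∧ Rr (v ^ (m+1)) g) := by
        intro m
        induction m with
        | zero => rw [pow_one]; exact hv
        | succ m ih =>
          rw [pow_succ]
          exact hmulH _ _ ih hv
      obtain ⟨m, hm1, hm⟩ := exists_idem_pow (S := S) v
      obtain ⟨m', rfl⟩ : ∃ m', m = m' + 1 := ⟨m - 1, by omega⟩
      have hvm : v ^ (m' + 1) = g := by
        obtain ⟨t, ht⟩ := (hpow m').1.1    -- t * v^(m'+1) = g
        have h1 : g * v ^ (m'+1) = v ^ (m'+1) := hgildR _ (hpow m').2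
        have h2 : g * v ^ (m'+1) = g := by
          calc g * v ^ (m'+1) = (t * v ^ (m'+1)) * v ^ (m'+1) := by rw [ht]
            _ = t * (v ^ (m'+1) * v ^ (m'+1)) := by rw [mul_assoc]
            _ = t * v ^ (m'+1) := by rw [hm]
            _ = g := ht
        rw [← h1, h2]
      rcases Nat.eq_zero_or_pos m' with hm' | hm'
      · subst hm'
        rw [pow_one] at hvm
        subst hvm
        exact ⟨v, hv, hgg, hgg⟩
      · obtain ⟨m'', rfl⟩ : ∃ m'', m' = m'' + 1 := ⟨m' - 1, by omega⟩
        refine ⟨v ^ (m'' + 1), hpow m'', ?_, ?_⟩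
        · rw [← pow_succ]; exact hvm
        · rw [← pow_succ']; exact hvm
    -- build the group as a type
    classical
    let St := {v : M // Lr v g ∧ Rr v g}
    letI : Mul St := ⟨fun v u => ⟨v.1 * u.1, hmulH _ _ v.2 u.2⟩⟩
    letI : One St := ⟨⟨g, Lr.refl g, Rr.refl g⟩⟩
    letI : Inv St := ⟨fun v => ⟨Classical.choose (hinv v.1 v.2),
      (Classical.choose_spec (hinv v.1 v.2)).1⟩⟩
    have hmulSt : ∀ v u : St, (v * u).1 = v.1 * u.1 := fun _ _ => rfl
    have honeSt : ((1 : St) : M) = g := rfl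
    letI : Group St := Group.ofLeftAxioms
      (fun v u t => Subtype.ext (mul_assoc v.1 u.1 t.1))
      (fun v => Subtype.ext (hgildR v.1 v.2.2))
      (fun v => Subtype.ext (Classical.choose_spec (hinv v.1 v.2)).2.1)
    haveI : Finite St := Subtype.finite
    haveI : Fintype St := Fintype.ofFinite St
    let nn := Fintype.card St
    let eqv : St ≃ Fin nn := Fintype.equivFin St
    letI : Mul (Fin nn) := ⟨fun i j => eqv (eqv.symm i * eqv.symm j)⟩
    letI : One (Fin nn) := ⟨eqv 1⟩
    letI : Inv (Fin nn) := ⟨fun i => eqv (eqv.symm i)⁻¹⟩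
    have hmulF : ∀ i j : Fin nn, i * j = eqv (eqv.symm i * eqv.symm j) := fun _ _ => rfl
    letI : Group (Fin nn) := Group.ofLeftAxioms
      (by
        intro i j l
        show eqv (eqv.symm (eqv (eqv.symm i * eqv.symm j)) * eqv.symm l)
            = eqv (eqv.symm i * eqv.symm (eqv (eqv.symm j * eqv.symm l)))
        rw [Equiv.symm_apply_apply, Equiv.symm_apply_apply, mul_assoc])
      (by
        intro i
        show eqv (eqv.symm (eqv 1) * eqv.symm i) = i
        rw [Equiv.symm_apply_apply, one_mul, Equiv.apply_symm_apply])
      (by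
        intro i
        show eqv (eqv.symm (eqv (eqv.symm i)⁻¹) * eqv.symm i) = eqv 1
        rw [Equiv.symm_apply_apply, inv_mul_cancel])
    -- the group embeds in S
    have hrep : ∀ i : Fin nn, ∃ s : S, ((eqv.symm i).1 : M) = (s : M) :=
      fun i => himgJ (hJg_of _ (eqv.symm i).2)
    let φ : Fin nn → S := fun i => Classical.choose (hrep i)
    have hφ : ∀ i : Fin nn, ((eqv.symm i).1 : M) = ((φ i : S) : M) :=
      fun i => Classical.choose_spec (hrep i)
    have hφmul : ∀ i j : Fin nn, φ (i * j) = φ i * φ j := by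
      intro i j
      have h1 : ((φ (i * j) : S) : M) = ((φ i * φ j : S) : M) := by
        rw [← hφ (i * j), hmulF i j, Equiv.symm_apply_apply, WithOne.coe_mul,
          ← hφ i, ← hφ j]
        rfl
      exact_mod_cast h1
    have hφinj : Function.Injective φ := by
      intro i j hij
      have h1 : ((eqv.symm i).1 : M) = ((eqv.symm j).1 : M) := by
        rw [hφ i, hφ j, hij]
      have h2 : eqv.symm i = eqv.symm j := Subtype.ext h1
      exact eqv.symm.injective h2
    have hGnil : Group.IsNilpotent (Fin nn) := hnil (Fin nn) φ hφmul hφinj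
    obtain ⟨c, hc1, hmalG⟩ := group_malcev hGnil
    -- transported cycle
    have hz''Hg : ∀ m, Lr (g * (w m * pp) * g) g ∧ Rr (g * (w m * pp) * g) g := by
      intro m
      -- first, the recursion identity
      have hAg : (qq * (Q m).1) * g = qq * (Q m).1 := hgildL _ (hHgL m).1
      have hgB : g * (qq * (Q m).2) = qq * (Q m).2 := hgildR _ (hHgR m).2
      have hppB : pp * (qq * (Q m).2) = (Q m).2 := hfix _ (hRany2 m).2
      have hrec : (qq * (Q m).1) * (g * (w m * pp) * g) * (qq * (Q m).2)
          = qq * (Q (m+1)).1 := by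
        calc (qq * (Q m).1) * (g * (w m * pp) * g) * (qq * (Q m).2)
            = ((qq * (Q m).1) * g) * (w m * pp) * (g * (qq * (Q m).2)) := by
              simp [mul_assoc]
          _ = (qq * (Q m).1) * (w m * pp) * (qq * (Q m).2) := by rw [hAg, hgB]
          _ = (qq * (Q m).1) * w m * (pp * (qq * (Q m).2)) := by simp [mul_assoc]
          _ = (qq * (Q m).1) * w m * (Q m).2 := by rw [hppB]
          _ = qq * ((Q m).1 * w m * (Q m).2) := by simp [mul_assoc]
          _ = qq * (Q (m+1)).1 := by rw [← lr_fst]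
      obtain ⟨A', hA', hA'l, hA'r⟩ := hinv _ (hHgL m)
      obtain ⟨B', hB', hB'l, hB'r⟩ := hinv _ (hHgR m)
      have hgzg : g * (g * (w m * pp) * g) * g = g * (w m * pp) * g := by
        calc g * (g * (w m * pp) * g) * g = (g * g) * (w m * pp) * (g * g) := by
              simp [mul_assoc]
          _ = g * (w m * pp) * g := by rw [hgg]
      have hz''eq : g * (w m * pp) * g = A' * (qq * (Q (m+1)).1) * B' := by
        rw [← hrec]
        calc g * (w m * pp) * g
            = (g) * (g * (w m * pp) * g) * (g) := hgzg.symm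
          _ = (A' * (qq * (Q m).1)) * (g * (w m * pp) * g) * ((qq * (Q m).2) * B') := by
              rw [hA'l, hB'r]
          _ = A' * ((qq * (Q m).1) * (g * (w m * pp) * g) * (qq * (Q m).2)) * B' := by
              simp [mul_assoc]
      rw [hz''eq]
      exact hmulH _ _ (hmulH _ _ hA' (hHgL (m+1))) hB'
    -- recursion identity (again, outside)
    have hrec : ∀ m, (qq * (Q m).1) * (g * (w m * pp) * g) * (qq * (Q m).2)
        = qq * (Q (m+1)).1 := by
      intro m
      have hAg : (qq * (Q m).1) * g = qq * (Q m).1 := hgildL _ (hHgL m).1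
      have hgB : g * (qq * (Q m).2) = qq * (Q m).2 := hgildR _ (hHgR m).2
      have hppB : pp * (qq * (Q m).2) = (Q m).2 := hfix _ (hRany2 m).2
      calc (qq * (Q m).1) * (g * (w m * pp) * g) * (qq * (Q m).2)
          = ((qq * (Q m).1) * g) * (w m * pp) * (g * (qq * (Q m).2)) := by
            simp [mul_assoc]
        _ = (qq * (Q m).1) * (w m * pp) * (qq * (Q m).2) := by rw [hAg, hgB]
        _ = (qq * (Q m).1) * w m * (pp * (qq * (Q m).2)) := by simp [mul_assoc]
        _ = (qq * (Q m).1) * w m * (Q m).2 := by rw [hppB]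
        _ = qq * ((Q m).1 * w m * (Q m).2) := by simp [mul_assoc]
        _ = qq * (Q (m+1)).1 := by rw [← lr_fst]
    have hrec2 : ∀ m, (qq * (Q m).2) * (g * (w m * pp) * g) * (qq * (Q m).1)
        = qq * (Q (m+1)).2 := by
      intro m
      have hAg : (qq * (Q m).2) * g = qq * (Q m).2 := hgildL _ (hHgR m).1
      have hgB : g * (qq * (Q m).1) = qq * (Q m).1 := hgildR _ (hHgL m).2
      have hppB : pp * (qq * (Q m).1) = (Q m).1 := hfix _ (trR1 m).2
      calc (qq * (Q m).2) * (g * (w m * pp) * g) * (qq * (Q m).1)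
          = ((qq * (Q m).2) * g) * (w m * pp) * (g * (qq * (Q m).1)) := by
            simp [mul_assoc]
        _ = (qq * (Q m).2) * (w m * pp) * (qq * (Q m).1) := by rw [hAg, hgB]
        _ = (qq * (Q m).2) * w m * (pp * (qq * (Q m).1)) := by simp [mul_assoc]
        _ = (qq * (Q m).2) * w m * (Q m).1 := by rw [hppB]
        _ = qq * ((Q m).2 * w m * (Q m).1) := by simp [mul_assoc]
        _ = qq * (Q (m+1)).2 := by rw [← lr_snd]
    -- sequences in St
    let ΛS : ℕ → St := fun m => ⟨qq * (Q m).1, hHgL m⟩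
    let ΡS : ℕ → St := fun m => ⟨qq * (Q m).2, hHgR m⟩
    let ZS : ℕ → St := fun m => ⟨g * (w m * pp) * g, hz''Hg m⟩
    have hlrS : ∀ m, (lr (ΛS 0) (ΡS 0) ZS m).1 = ΛS m ∧ (lr (ΛS 0) (ΡS 0) ZS m).2 = ΡS m := by
      intro m
      induction m with
      | zero => exact ⟨rfl, rfl⟩
      | succ m ih =>
        constructor
        · refine Subtype.ext ?_
          show ((lr (ΛS 0) (ΡS 0) ZS m).1 * ZS m * (lr (ΛS 0) (ΡS 0) ZS m).2).1
              = (ΛS (m+1)).1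
          rw [ih.1, ih.2]
          exact hrec m
        · refine Subtype.ext ?_
          show ((lr (ΛS 0) (ΡS 0) ZS m).2 * ZS m * (lr (ΛS 0) (ΡS 0) ZS m).1).1
              = (ΡS (m+1)).1
          rw [ih.1, ih.2]
          exact hrec2 m
    -- sequences in Fin nn
    let Xf : Fin nn := eqv (ΛS 0)
    let Yf : Fin nn := eqv (ΡS 0)
    let Zf : ℕ → Fin nn := fun m => eqv (ZS m)
    have hψmul : ∀ i j : Fin nn, eqv.symm (i * j) = eqv.symm i * eqv.symm j := by
      intro i j
      rw [hmulF, Equiv.symm_apply_apply]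
    have hmap := lr_map (fun i : Fin nn => eqv.symm i) hψmul Xf Yf Zf c
    have hZf : (fun k => eqv.symm (Zf k)) = ZS := by
      funext k
      show eqv.symm (eqv (ZS k)) = ZS k
      rw [Equiv.symm_apply_apply]
    have hXf : eqv.symm Xf = ΛS 0 := Equiv.symm_apply_apply _ _
    have hYf : eqv.symm Yf = ΡS 0 := Equiv.symm_apply_apply _ _
    rw [hZf, hXf, hYf] at hmap
    have hfinal := hmalG Xf Yf Zf
    have hSt : (lr (ΛS 0) (ΡS 0) ZS c).1 = (lr (ΛS 0) (ΡS 0) ZS c).2 := by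
      rw [hmap.1, hmap.2, hfinal]
    have hMeq : qq * (Q c).1 = qq * (Q c).2 := by
      have h1 := (hlrS c).1
      have h2 := (hlrS c).2
      rw [h1, h2] at hSt
      exact congrArg Subtype.val hSt
    have : (Q c).1 = (Q c).2 := by
      have h1 := hfix _ (trR1 c).2
      have h2 := hfix _ (hRany2 c).2
      rw [← h1, ← h2, hMeq]
    exact hne c this

  · -- ¬H case: produce a P₂ violation
    -- mid-slot facts
    have hevL : ∀ m, Even m → Jr (a * w m * b) a := by
      intro m hm
      have base : Jr ((Q m).1 * w m * (Q m).2) a := by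
        have h0 := hJ1 (m+1)
        rw [lr_fst] at h0
        exact h0
      exact Jmid base (trL1e m hm).symm (trR2 m).symm
    have hevR : ∀ m, Even m → Jr (b * w m * a) a := by
      intro m hm
      have base : Jr ((Q m).2 * w m * (Q m).1) a := by
        have h0 := hJ2 (m+1)
        rw [lr_snd] at h0
        exact h0
      exact Jmid base (trL2e m hm).symm (trR1 m).symm
    have hodL : ∀ m, ¬ Even m → Jr (b * w m * b) a := by
      intro m hm
      have base : Jr ((Q m).1 * w m * (Q m).2) a := by
        have h0 := hJ1 (m+1)
        rw [lr_fst] at h0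
        exact h0
      exact Jmid base (trL1o m hm).symm (trR2 m).symm
    have hodR : ∀ m, ¬ Even m → Jr (a * w m * a) a := by
      intro m hm
      have base : Jr ((Q m).2 * w m * (Q m).1) a := by
        have h0 := hJ2 (m+1)
        rw [lr_snd] at h0
        exact h0
      exact Jmid base (trL2o m hm).symm (trR1 m).symm
    have haco : a = (a₀ : M) := hadef.trans ha₀
    have hbco : b = (b₀ : M) := hbdef.trans hb₀
    -- conclusion builder
    have concl : ∀ u v : S, Jr (a * (u : M) * b) a → Jr (a * (v : M) * a) a →
        Jr (b * (u : M) * a) a → Jr (b * (v : M) * b) a → Rr a b ∧ Lr a b := by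
      intro u v h1 h2 h3 h4
      have hJRel : JRel a₀ b₀ := by
        rw [JRel_iff_Jr, ← haco, ← hbco]
        exact hJba.symm
      have hc1 : JRel (a₀ * u * b₀) a₀ := by
        rw [JRel_iff_Jr, WithOne.coe_mul, WithOne.coe_mul, ← haco, ← hbco]
        exact h1
      have hc2 : JRel (a₀ * v * a₀) a₀ := by
        rw [JRel_iff_Jr, WithOne.coe_mul, WithOne.coe_mul, ← haco]
        exact h2
      have hc3 : JRel (b₀ * u * a₀) a₀ := by
        rw [JRel_iff_Jr, WithOne.coe_mul, WithOne.coe_mul, ← haco, ← hbco]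
        exact h3
      have hc4 : JRel (b₀ * v * b₀) a₀ := by
        rw [JRel_iff_Jr, WithOne.coe_mul, WithOne.coe_mul, ← haco, ← hbco]
        exact h4
      obtain ⟨hR, hL⟩ := hp a₀ b₀ u v hJRel hc1 hc2 hc3 hc4
      constructor
      · have h5 := RRel_iff_Rr.mp hR
        rwa [← haco, ← hbco] at h5
      · have h5 := LRel_iff_Lr.mp hL
        rwa [← haco, ← hbco] at h5
    by_cases hE : ∃ m, Even m ∧ w m ≠ 1
    · obtain ⟨me, hme, hwe⟩ := hE
      obtain ⟨u, hu⟩ := WithOne.ne_one_iff_exists.mp hwe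
      have c1 : Jr (a * (u : M) * b) a := by rw [hu]; exact hevL me hme
      have c3 : Jr (b * (u : M) * a) a := by rw [hu]; exact hevR me hme
      by_cases hO : ∃ m, ¬ Even m ∧ w m ≠ 1
      · -- EE case
        obtain ⟨mo, hmo, hwo⟩ := hO
        obtain ⟨v, hv⟩ := WithOne.ne_one_iff_exists.mp hwo
        have c2 : Jr (a * (v : M) * a) a := by rw [hv]; exact hodR mo hmo
        have c4 : Jr (b * (v : M) * b) a := by rw [hv]; exact hodL mo hmo
        exact hH (concl u v c1 c2 c3 c4)
      · -- E1 case : all odd slots are 1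
        push_neg at hO
        have h1odd : ¬ Even 1 := by simp
        have hw1 : w 1 = 1 := hO 1 h1odd
        have hbb : Jr ((Q 1).1 * (Q 1).2) a := by
          have h0 := hJ1 (1+1)
          rw [lr_fst] at h0
          rw [hw1, mul_one] at h0
          exact h0
        have haa : Jr ((Q 1).2 * (Q 1).1) a := by
          have h0 := hJ2 (1+1)
          rw [lr_snd] at h0
          rw [hw1, mul_one] at h0
          exact h0
        obtain ⟨e, hee, heJ, heL, heR⟩ := millerClifford (hJ1 1) (hJ2 1) hbb
        obtain ⟨f, hff, hfJ, hfL, hfR⟩ := millerClifford (hJ2 1) (hJ1 1) haa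
        have heLb : Lr e b := heL.trans (trL1o 1 h1odd)
        have heRb : Rr e b := heR.trans (trR2 1)
        have hfLa : Lr f a := hfL.trans (trL2o 1 h1odd)
        have hfRa : Rr f a := hfR.trans (trR1 1)
        -- a * u is L-related to b
        have hawJ : Jr (a * (u : M)) a := by
          constructor
          · obtain ⟨u', v', huv⟩ := c1.1
            refine ⟨u', b * v', ?_⟩
            calc u' * (a * (u : M)) * (b * v') = u' * (a * (u : M) * b) * v' := by
                  simp [mul_assoc]
              _ = a := huv
          · exact leJ_trans ⟨1, (u : M), by simp [mul_assoc]⟩ (leJ_refl a)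
        obtain ⟨e', he'e, he'J, he'L, he'R⟩ := millerClifford hawJ hJba c1
        obtain ⟨e₀, he₀⟩ := himgJ heJ
        obtain ⟨e'₀, he'₀⟩ := himgJ he'J
        have hee' : e' = e := bg_unique_R hbg he'e hee (he'R.trans heRb.symm) he'₀ he₀
        have hawLb : Lr (a * (u : M)) b := by
          have h5 := he'L.symm
          rw [hee'] at h5
          exact h5.trans heLb
        -- b * u is L-related to a
        have hbwJ : Jr (b * (u : M)) a := by
          constructor
          · obtain ⟨u', v', huv⟩ := c3.1
            refine ⟨u', a * v', ?_⟩
            calc u' * (b * (u : M)) * (a * v') = u' * (b * (u : M) * a) * v' := by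
                  simp [mul_assoc]
              _ = a := huv
          · exact leJ_trans ⟨1, (u : M), by simp [mul_assoc]⟩ hJba.2
        obtain ⟨f', hf'f, hf'J, hf'L, hf'R⟩ := millerClifford hbwJ (Jr.refl a) c3
        obtain ⟨f₀, hf₀⟩ := himgJ hfJ
        obtain ⟨f'₀, hf'₀⟩ := himgJ hf'J
        have hff' : f' = f := bg_unique_R hbg hf'f hff (hf'R.trans hfRa.symm) hf'₀ hf₀
        have hbwLa : Lr (b * (u : M)) a := by
          have h5 := hf'L.symm
          rw [hff'] at h5
          exact h5.trans hfLa
        have c2 : Jr (a * ((u * u : S) : M) * a) a := by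
          have h6 : Jr ((a * (u : M)) * (u : M) * a) a := Jmid c3 hawLb (Rr.refl a)
          simpa [WithOne.coe_mul, mul_assoc] using h6
        have c4 : Jr (b * ((u * u : S) : M) * b) a := by
          have h6 : Jr ((b * (u : M)) * (u : M) * b) a := Jmid c1 hbwLa (Rr.refl b)
          simpa [WithOne.coe_mul, mul_assoc] using h6
        exact hH (concl u (u * u) c1 c2 c3 c4)
    · push_neg at hE
      have hw0 : w 0 = 1 := hE 0 Even.zero
      have hQ01 : (Q 0).1 = a := rfl
      have hQ02 : (Q 0).2 = b := rfl
      have habJ : Jr (a * b) a := by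
        have h0 := hJ1 1
        rw [lr_fst] at h0
        rw [hQ01, hQ02, hw0, mul_one] at h0
        exact h0
      have hbaJ : Jr (b * a) a := by
        have h0 := hJ2 1
        rw [lr_snd] at h0
        rw [hQ01, hQ02, hw0, mul_one] at h0
        exact h0
      obtain ⟨e1, he1e, he1J, he1L, he1R⟩ := millerClifford (Jr.refl a) hJba habJ
      obtain ⟨f1, hf1f, hf1J, hf1L, hf1R⟩ := millerClifford hJba (Jr.refl a) hbaJ
      -- e1 : Lr e1 a, Rr e1 b ; f1 : Lr f1 b, Rr f1 a
      by_cases hO : ∃ m, ¬ Even m ∧ w m ≠ 1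
      · -- 1O case
        obtain ⟨mo, hmo, hwo⟩ := hO
        obtain ⟨v, hv⟩ := WithOne.ne_one_iff_exists.mp hwo
        have c2 : Jr (a * (v : M) * a) a := by rw [hv]; exact hodR mo hmo
        have c4 : Jr (b * (v : M) * b) a := by rw [hv]; exact hodL mo hmo
        have havJ : Jr (a * (v : M)) a := by
          constructor
          · obtain ⟨u', v', huv⟩ := c2.1
            refine ⟨u', a * v', ?_⟩
            calc u' * (a * (v : M)) * (a * v') = u' * (a * (v : M) * a) * v' := by
                  simp [mul_assoc]
              _ = a := huv
          · exact leJ_trans ⟨1, (v : M), by simp [mul_assoc]⟩ (leJ_refl a)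
        obtain ⟨f'', hf''f, hf''J, hf''L, hf''R⟩ := millerClifford havJ (Jr.refl a) c2
        obtain ⟨f1₀, hf1₀⟩ := himgJ hf1J
        obtain ⟨f''₀, hf''₀⟩ := himgJ hf''J
        have hf''f1 : f'' = f1 := bg_unique_R hbg hf''f hf1f (hf''R.trans hf1R.symm) hf''₀ hf1₀
        have havLb : Lr (a * (v : M)) b := by
          have h5 := hf''L.symm
          rw [hf''f1] at h5
          exact h5.trans hf1L
        have hbvJ : Jr (b * (v : M)) a := by
          constructor
          · obtain ⟨u', v', huv⟩ := c4.1
            refine ⟨u', b * v', ?_⟩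
            calc u' * (b * (v : M)) * (b * v') = u' * (b * (v : M) * b) * v' := by
                  simp [mul_assoc]
              _ = a := huv
          · exact leJ_trans ⟨1, (v : M), by simp [mul_assoc]⟩ hJba.2
        obtain ⟨e'', he''e, he''J, he''L, he''R⟩ := millerClifford hbvJ hJba c4
        obtain ⟨e1₀, he1₀⟩ := himgJ he1J
        obtain ⟨e''₀, he''₀⟩ := himgJ he''J
        have he''e1 : e'' = e1 := bg_unique_R hbg he''e he1e (he''R.trans he1R.symm) he''₀ he1₀
        have hbvLa : Lr (b * (v : M)) a := by
          have h5 := he''L.symm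
          rw [he''e1] at h5
          exact h5.trans he1L
        have c1 : Jr (a * ((v * v : S) : M) * b) a := by
          have h6 : Jr ((a * (v : M)) * (v : M) * b) a := Jmid c4 havLb (Rr.refl b)
          simpa [WithOne.coe_mul, mul_assoc] using h6
        have c3 : Jr (b * ((v * v : S) : M) * a) a := by
          have h6 : Jr ((b * (v : M)) * (v : M) * a) a := Jmid c2 hbvLa (Rr.refl a)
          simpa [WithOne.coe_mul, mul_assoc] using h6
        exact hH (concl (v * v) v c1 c2 c3 c4)
      · -- 11 case : all slots are 1, contradiction with ¬H directly
        push_neg at hO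
        have h1odd : ¬ Even 1 := by simp
        have hw1 : w 1 = 1 := hO 1 h1odd
        have hbb : Jr ((Q 1).1 * (Q 1).2) a := by
          have h0 := hJ1 (1+1)
          rw [lr_fst] at h0
          rw [hw1, mul_one] at h0
          exact h0
        have haa : Jr ((Q 1).2 * (Q 1).1) a := by
          have h0 := hJ2 (1+1)
          rw [lr_snd] at h0
          rw [hw1, mul_one] at h0
          exact h0
        obtain ⟨e2, he2e, he2J, he2L, he2R⟩ := millerClifford (hJ1 1) (hJ2 1) hbb
        obtain ⟨f2, hf2f, hf2J, hf2L, hf2R⟩ := millerClifford (hJ2 1) (hJ1 1) haa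
        have he2Rb : Rr e2 b := he2R.trans (trR2 1)
        have hf2La : Lr f2 a := hf2L.trans (trL2o 1 h1odd)
        have hf2Ra : Rr f2 a := hf2R.trans (trR1 1)
        obtain ⟨e1₀, he1₀⟩ := himgJ he1J
        obtain ⟨f1₀, hf1₀⟩ := himgJ hf1J
        obtain ⟨f2₀, hf2₀⟩ := himgJ hf2J
        have hef : e1 = f2 := bg_unique_L hbg he1e hf2f (he1L.trans hf2La.symm) he1₀ hf2₀
        have hRab : Rr a b := by
          have h5 : Rr a f2 := hf2Ra.symm
          rw [← hef] at h5
          exact h5.trans he1R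
        have hf1f2 : f1 = f2 := bg_unique_R hbg hf1f hf2f (hf1R.trans hf2Ra.symm) hf1₀ hf2₀
        have hLab : Lr a b := by
          have h5 : Lr a f2 := hf2La.symm
          rw [← hf1f2] at h5
          exact h5.trans hf1L
        exact hH ⟨hRab, hLab⟩


end Dir2


/-- A finite block group with all subgroups nilpotent is Mal'cev nilpotent iff it
satisfies Property `P₂`. -/
theorem stmt13 (S : Type*) [Semigroup S] [Finite S]
    (hbg : BlockGroup S) (hnil : AllSubgroupsNilpotent S) :
    MalcevNilpotent S ↔ PropertyP2 S := by
  constructor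
  · intro h
    exact malcev_implies_P2 h
  · intro h
    exact P2_implies_malcev hbg hnil h


end SMN
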